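/- Let M be a submonoid of the additive monoid ℚ₊ of nonnegative rational numbers. Then M is difference-closed if and only if M satisfies the gcd/lcm condition. -/
import Mathlib

/-- `M` is difference-closed: for any `a, b ∈ M` with `b ≤ a`, `a - b ∈ M`. -/
def DifferenceClosed (M : AddSubmonoid ℚ) : Prop :=
  ∀ a ∈ M, ∀ b ∈ M, b ≤ a → a - b ∈ M

/-- `M` satisfies the gcd/lcm condition: for any two elements `m₁/n₁, m₂/n₂` of `M`
written in reduced form, at least one of which is nonzero,
`gcd(m₁, m₂)/lcm(n₁, n₂) ∈ M`.  (For `a : ℚ`, `a.num`/`a.den` is the reduced form.) -/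
def GcdLcmCondition (M : AddSubmonoid ℚ) : Prop :=
  ∀ a ∈ M, ∀ b ∈ M, (a ≠ 0 ∨ b ≠ 0) →
    ((Nat.gcd a.num.natAbs b.num.natAbs : ℚ) / (Nat.lcm a.den b.den : ℚ)) ∈ M

section aux

/-- Key gcd identity. -/
lemma gcd_mul_div_eq (m₁ n₁ m₂ n₂ : ℕ) (hn₁ : 0 < n₁) (hn₂ : 0 < n₂)
    (h₁ : Nat.Coprime m₁ n₁) (h₂ : Nat.Coprime m₂ n₂) :
    Nat.gcd (m₁ * (n₂ / Nat.gcd n₁ n₂)) (m₂ * (n₁ / Nat.gcd n₁ n₂)) = Nat.gcd m₁ m₂ := by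
  set d := Nat.gcd n₁ n₂ with hd
  have hd0 : 0 < d := Nat.gcd_pos_of_pos_left _ hn₁
  have hcop : Nat.Coprime (n₁ / d) (n₂ / d) := Nat.coprime_div_gcd_div_gcd hd0
  have hs'n₂ : n₂ / d ∣ n₂ := Nat.div_dvd_of_dvd (Nat.gcd_dvd_right _ _)
  have hq'n₁ : n₁ / d ∣ n₁ := Nat.div_dvd_of_dvd (Nat.gcd_dvd_left _ _)
  have c1 : Nat.Coprime (n₂ / d) m₂ := (h₂.symm.coprime_dvd_left hs'n₂)
  have c2 : Nat.Coprime (n₂ / d) (n₁ / d) := hcop.symm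
  have c3 : Nat.Coprime (n₁ / d) m₁ := (h₁.symm.coprime_dvd_left hq'n₁)
  have := (c1.mul_right c2).gcd_mul_right_cancel m₁
  rw [this, Nat.Coprime.gcd_mul_right_cancel_right _ c3]

end aux

lemma exists_int_combo (a b : ℚ) (ha : 0 ≤ a) (hb : 0 ≤ b) :
    ∃ u v : ℤ, (Nat.gcd a.num.natAbs b.num.natAbs : ℚ) / (Nat.lcm a.den b.den : ℚ)
      = u * a + v * b := by
  set m₁ := a.num.natAbs
  set m₂ := b.num.natAbs
  set n₁ := a.den
  set n₂ := b.den
  set d := Nat.gcd n₁ n₂ with hd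
  have hn₁ : 0 < n₁ := a.pos
  have hn₂ : 0 < n₂ := b.pos
  have hd0 : 0 < d := Nat.gcd_pos_of_pos_left _ hn₁
  set s' := n₂ / d with hs'
  set q' := n₁ / d with hq'
  have hL1 : n₁ * s' = Nat.lcm n₁ n₂ := by
    rw [hs', Nat.lcm, Nat.mul_div_assoc _ (Nat.gcd_dvd_right _ _)]
  have hL2 : n₂ * q' = Nat.lcm n₁ n₂ := by
    rw [hq', Nat.lcm_comm, Nat.lcm, Nat.gcd_comm, Nat.mul_div_assoc _ (Nat.gcd_dvd_left _ _)]
  have hgcd : Nat.gcd (m₁ * s') (m₂ * q') = Nat.gcd m₁ m₂ :=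
    gcd_mul_div_eq m₁ n₁ m₂ n₂ hn₁ hn₂ a.reduced b.reduced
  have hbez := Nat.gcd_eq_gcd_ab (m₁ * s') (m₂ * q')
  rw [hgcd] at hbez
  refine ⟨Nat.gcdA (m₁ * s') (m₂ * q'), Nat.gcdB (m₁ * s') (m₂ * q'), ?_⟩
  set u := Nat.gcdA (m₁ * s') (m₂ * q')
  set v := Nat.gcdB (m₁ * s') (m₂ * q')
  have hL0 : ((Nat.lcm n₁ n₂ : ℚ)) ≠ 0 := by
    exact_mod_cast (Nat.lcm_ne_zero hn₁.ne' hn₂.ne')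
  have ham : ((m₁ : ℚ)) = a.num := by
    have : (m₁ : ℤ) = a.num := Int.natAbs_of_nonneg (Rat.num_nonneg.mpr ha)
    exact_mod_cast this
  have hbm : ((m₂ : ℚ)) = b.num := by
    have : (m₂ : ℤ) = b.num := Int.natAbs_of_nonneg (Rat.num_nonneg.mpr hb)
    exact_mod_cast this
  have ha' : a * (n₁ : ℚ) = (m₁ : ℚ) := by rw [ham]; exact_mod_cast Rat.mul_den_eq_num a
  have hb' : b * (n₂ : ℚ) = (m₂ : ℚ) := by rw [hbm]; exact_mod_cast Rat.mul_den_eq_num b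
  rw [div_eq_iff hL0]
  have hbezQ : ((Nat.gcd m₁ m₂ : ℚ)) = (m₁ : ℚ) * s' * u + (m₂ : ℚ) * q' * v := by
    exact_mod_cast congrArg (fun z : ℤ => (z : ℚ)) hbez
  have hL1Q : (n₁ : ℚ) * s' = (Nat.lcm n₁ n₂ : ℚ) := by exact_mod_cast hL1
  have hL2Q : (n₂ : ℚ) * q' = (Nat.lcm n₁ n₂ : ℚ) := by exact_mod_cast hL2
  rw [hbezQ]
  linear_combination (-(u : ℚ)) * (s' : ℚ) * ha' + (-(v : ℚ)) * (q' : ℚ) * hb'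
    + (u : ℚ) * a * hL1Q + (v : ℚ) * b * hL2Q

lemma eq_nat_mul_gcd_div_lcm (a b : ℚ) (ha : 0 ≤ a) (hb : 0 ≤ b)
    (hG : Nat.gcd a.num.natAbs b.num.natAbs ≠ 0) :
    ∃ k : ℕ, a = (k : ℚ) *
      ((Nat.gcd a.num.natAbs b.num.natAbs : ℚ) / (Nat.lcm a.den b.den : ℚ)) := by
  set m₁ := a.num.natAbs
  set m₂ := b.num.natAbs
  set n₁ := a.den
  set n₂ := b.den
  set d := Nat.gcd n₁ n₂ with hd
  set G := Nat.gcd m₁ m₂ with hGdef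
  have hn₁ : 0 < n₁ := a.pos
  have hn₂ : 0 < n₂ := b.pos
  set s' := n₂ / d with hs'
  have hL1 : n₁ * s' = Nat.lcm n₁ n₂ := by
    rw [hs', Nat.lcm, Nat.mul_div_assoc _ (Nat.gcd_dvd_right _ _)]
  have hL0 : ((Nat.lcm n₁ n₂ : ℚ)) ≠ 0 := by
    exact_mod_cast (Nat.lcm_ne_zero hn₁.ne' hn₂.ne')
  have ham : ((m₁ : ℚ)) = a.num := by
    have : (m₁ : ℤ) = a.num := Int.natAbs_of_nonneg (Rat.num_nonneg.mpr ha)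
    exact_mod_cast this
  have ha' : a * (n₁ : ℚ) = (m₁ : ℚ) := by rw [ham]; exact_mod_cast Rat.mul_den_eq_num a
  have hL1Q : (n₁ : ℚ) * s' = (Nat.lcm n₁ n₂ : ℚ) := by exact_mod_cast hL1
  refine ⟨(m₁ / G) * s', ?_⟩
  have hkG : ((m₁ / G) * s') * G = m₁ * s' := by
    rw [mul_comm (m₁ / G) s', mul_assoc, Nat.div_mul_cancel (Nat.gcd_dvd_left _ _)]
    ring
  have h1 : (((m₁ / G) * s' : ℕ) : ℚ) * (G : ℚ) = (m₁ : ℚ) * (s' : ℚ) := by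
    exact_mod_cast hkG
  rw [mul_div_assoc', eq_comm, div_eq_iff hL0, h1]
  linear_combination (-(s' : ℚ)) * ha' + a * hL1Q

theorem differenceClosed_iff_gcdLcmCondition (M : AddSubmonoid ℚ)
    (hM : ∀ x ∈ M, (0 : ℚ) ≤ x) :
    DifferenceClosed M ↔ GcdLcmCondition M := by
  constructor
  · intro h a haM b hbM hab
    obtain ⟨u, v, huv⟩ := exists_int_combo a b (hM a haM) (hM b hbM)
    set g : ℚ := (Nat.gcd a.num.natAbs b.num.natAbs : ℚ) / (Nat.lcm a.den b.den : ℚ) with hg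
    have hg0 : 0 ≤ g := by positivity
    have hx : u.toNat • a + v.toNat • b ∈ M :=
      add_mem (nsmul_mem haM _) (nsmul_mem hbM _)
    have hy : (-u).toNat • a + (-v).toNat • b ∈ M :=
      add_mem (nsmul_mem haM _) (nsmul_mem hbM _)
    have hgxy : g = (u.toNat • a + v.toNat • b) - ((-u).toNat • a + (-v).toNat • b) := by
      rw [huv]
      have h1 : ((u.toNat : ℚ)) - ((-u).toNat : ℚ) = (u : ℚ) := by
        have := Int.toNat_sub_toNat_neg u
        exact_mod_cast this
      have h2 : ((v.toNat : ℚ)) - ((-v).toNat : ℚ) = (v : ℚ) := by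
        have := Int.toNat_sub_toNat_neg v
        exact_mod_cast this
      simp only [nsmul_eq_mul]
      linear_combination (-a) * h1 + (-b) * h2
    have hle : (-u).toNat • a + (-v).toNat • b ≤ u.toNat • a + v.toNat • b := by
      have := hg0
      rw [hgxy] at this
      linarith
    rw [hgxy]
    exact h _ hx _ hy hle
  · intro h a haM b hbM hba
    by_cases hb0 : b = 0
    · simpa [hb0] using haM
    · have hGM := h a haM b hbM (Or.inr hb0)
      set g : ℚ := (Nat.gcd a.num.natAbs b.num.natAbs : ℚ) / (Nat.lcm a.den b.den : ℚ) with hg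
      have hG : Nat.gcd a.num.natAbs b.num.natAbs ≠ 0 := fun hz =>
        (Rat.num_ne_zero.mpr hb0)
          (Int.natAbs_eq_zero.mp (Nat.eq_zero_of_gcd_eq_zero_right hz))
      obtain ⟨k₁, hk₁⟩ := eq_nat_mul_gcd_div_lcm a b (hM a haM) (hM b hbM) hG
      obtain ⟨k₂, hk₂'⟩ := eq_nat_mul_gcd_div_lcm b a (hM b hbM) (hM a haM)
        (by rwa [Nat.gcd_comm])
      have hk₂ : b = (k₂ : ℚ) * g := by
        rw [hg, ← Nat.gcd_comm b.num.natAbs, ← Nat.lcm_comm b.den]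
        exact hk₂'
      have hk₁' : a = (k₁ : ℚ) * g := by rw [hg]; exact hk₁
      have hgpos : 0 < g := by
        rw [hg]
        apply div_pos
        · exact_mod_cast hG.bot_lt
        · exact_mod_cast (Nat.lcm_ne_zero a.pos.ne' b.pos.ne').bot_lt
      have hkk : k₂ ≤ k₁ := by
        by_contra hc
        push_neg at hc
        have hcq : (k₁ : ℚ) < (k₂ : ℚ) := by exact_mod_cast hc
        nlinarith [hgpos, hba, hk₁', hk₂]
      have : a - b = ((k₁ - k₂ : ℕ) : ℚ) * g := by
        rw [Nat.cast_sub hkk]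
        linear_combination hk₁' - hk₂
      rw [this, ← nsmul_eq_mul]
      exact nsmul_mem hGM _
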